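/- Let p ≥ 3 be prime and a ∈ ℚ_p with |a|_p > 1 and b ∈ ℚ_p with b² = 1 - a. Then for every x ∈ ℚ_p \ {0} that does not lie in D(1/b, |b|_p^{-1}/p) ∪ D(-1/b, |b|_p^{-1}/p), the iterates of φ(x) = a·x + 1/x satisfy |φⁿ(x)|_p → ∞ as n → ∞. -/

import Mathlib

theorem stmt14 (p : ℕ) [Fact p.Prime] (hp : 3 ≤ p) (a b : ℚ_[p]) (ha : 1 < ‖a‖)
    (hb : b ^ 2 = 1 - a)
    (x : ℚ_[p]) (hx : x ≠ 0)
    (h1 : ¬ ‖x - 1 / b‖ ≤ ‖b‖⁻¹ / p)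
    (h2 : ¬ ‖x - (-(1 / b))‖ ≤ ‖b‖⁻¹ / p) :
    Filter.Tendsto (fun n : ℕ => ‖(fun z : ℚ_[p] => a * z + 1 / z)^[n] x‖)
      Filter.atTop Filter.atTop := by
  set φ : ℚ_[p] → ℚ_[p] := fun z => a * z + 1 / z with hφ
  have ha0 : a ≠ 0 := by
    intro h; rw [h, norm_zero] at ha; linarith
  -- step lemma
  have step : ∀ y : ℚ_[p], 1 ≤ ‖y‖ → ‖φ y‖ = ‖a‖ * ‖y‖ := by
    intro y hy
    have hy0 : y ≠ 0 := by
      intro h; rw [h, norm_zero] at hy; linarith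
    have h1y : ‖(1 : ℚ_[p]) / y‖ = ‖y‖⁻¹ := by simp [norm_div]
    have hgt : ‖(1 : ℚ_[p]) / y‖ < ‖a * y‖ := by
      rw [h1y, norm_mul]
      have : ‖y‖⁻¹ ≤ 1 := by
        rw [inv_le_one_iff₀]; right; exact hy
      have hyp : (0:ℝ) < ‖y‖ := norm_pos_iff.mpr hy0
      nlinarith
    have hne : ‖a * y‖ ≠ ‖(1:ℚ_[p]) / y‖ := (ne_of_lt hgt).symm
    have := Padic.add_eq_max_of_ne hne
    rw [hφ]
    simp only []
    rw [this, max_eq_left (le_of_lt hgt), norm_mul]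
  -- iterates from a point of norm ≥ 1
  have iter : ∀ (y : ℚ_[p]), 1 ≤ ‖y‖ → ∀ n : ℕ, ‖φ^[n] y‖ = ‖a‖ ^ n * ‖y‖ := by
    intro y hy n
    induction n with
    | zero => simp
    | succ n ih =>
      have hn1 : 1 ≤ ‖φ^[n] y‖ := by
        rw [ih]
        have : (1:ℝ) ≤ ‖a‖ ^ n := one_le_pow₀ (le_of_lt ha)
        nlinarith
      rw [Function.iterate_succ_apply', step _ hn1, ih, pow_succ]
      ring
  -- key: ‖φ x‖ ≥ 1
  have key : 1 ≤ ‖φ x‖ := by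
    rcases le_or_gt 1 ‖x‖ with hx1 | hx1
    · rw [step x hx1]
      nlinarith
    · -- small case
      have hb0 : b ≠ 0 := by
        intro h
        rw [h] at hb
        have : a = 1 := by linear_combination hb
        rw [this, norm_one] at ha; linarith
      have hnb2 : ‖b‖ ^ 2 = ‖a‖ := by
        have h1a : ‖(1:ℚ_[p]) - a‖ = ‖a‖ := by
          have hne : ‖(1:ℚ_[p])‖ ≠ ‖-a‖ := by
            rw [norm_one, norm_neg]; exact (ne_of_lt ha)
          have := Padic.add_eq_max_of_ne hne
          rw [sub_eq_add_neg, this, norm_neg, norm_one, max_eq_right (le_of_lt ha)]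
        calc ‖b‖ ^ 2 = ‖b ^ 2‖ := by rw [norm_pow]
          _ = ‖a‖ := by rw [hb, h1a]
      have hnb : 1 < ‖b‖ := by nlinarith [norm_nonneg b]
      -- discreteness: ‖b‖⁻¹ ≤ ‖x ± 1/b‖
      have hval : ‖b‖ = (p:ℝ) ^ (-b.valuation) := Padic.norm_eq_zpow_neg_valuation hb0
      have hp1 : (1:ℝ) < (p:ℝ) := by exact_mod_cast (Fact.out : p.Prime).one_lt
      have hdisc : ∀ z : ℚ_[p], ¬ ‖z‖ ≤ ‖b‖⁻¹ / p → ‖b‖⁻¹ ≤ ‖z‖ := by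
        intro z hz
        have hb' : ‖b‖⁻¹ / p = (p:ℝ) ^ (b.valuation - 1) := by
          rw [hval, ← zpow_neg, neg_neg, zpow_sub₀ (by positivity), zpow_one]
        rw [hb'] at hz
        have := (Padic.norm_le_pow_iff_norm_lt_pow_add_one z (b.valuation - 1)).not.mp hz
        push_neg at this
        rw [sub_add_cancel] at this
        rw [hval, ← zpow_neg, neg_neg]
        exact this
      have hA : ‖b‖⁻¹ ≤ ‖x - 1/b‖ := hdisc _ h1
      have hB : ‖b‖⁻¹ ≤ ‖x + 1/b‖ := by
        have := hdisc _ h2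
        rwa [sub_neg_eq_add] at this
      -- B = b^2 (x - 1/b)(x + 1/b)
      set B : ℚ_[p] := b ^ 2 * (x - 1/b) * (x + 1/b) with hBdef
      have hnB : 1 ≤ ‖B‖ := by
        have : ‖B‖ = ‖b‖ ^ 2 * ‖x - 1/b‖ * ‖x + 1/b‖ := by
          rw [hBdef, norm_mul, norm_mul, norm_pow]
        rw [this]
        have hbpos : (0:ℝ) < ‖b‖⁻¹ := by positivity
        calc (1:ℝ) = ‖b‖ ^ 2 * ‖b‖⁻¹ * ‖b‖⁻¹ := by
              field_simp
          _ ≤ ‖b‖ ^ 2 * ‖x - 1/b‖ * ‖x + 1/b‖ := by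
              apply mul_le_mul
              · apply mul_le_mul_of_nonneg_left hA (by positivity)
              · exact hB
              · positivity
              · positivity
        
      have hid : a * x ^ 2 + 1 = x ^ 2 - B := by
        have h1b : b ^ 2 * (x - 1/b) * (x + 1/b) = b ^ 2 * x ^ 2 - 1 := by
          field_simp; ring
        rw [hBdef, h1b, hb]; ring
      have hx2 : ‖x ^ 2‖ < 1 := by
        rw [norm_pow]
        nlinarith [norm_nonneg x]
      have hnum : ‖a * x ^ 2 + 1‖ = ‖B‖ := by
        rw [hid, sub_eq_add_neg]
        have hne : ‖x ^ 2‖ ≠ ‖-B‖ := by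
          rw [norm_neg]; exact ne_of_lt (lt_of_lt_of_le hx2 hnB)
        rw [Padic.add_eq_max_of_ne hne, norm_neg,
          max_eq_right (le_of_lt (lt_of_lt_of_le hx2 hnB))]
      have hφx : φ x = (a * x ^ 2 + 1) / x := by
        rw [hφ]; field_simp
      rw [hφx, norm_div, hnum]
      have hxpos : (0:ℝ) < ‖x‖ := norm_pos_iff.mpr hx
      rw [le_div_iff₀ hxpos, one_mul]
      exact le_trans (le_of_lt hx1) hnB
  -- conclude
  have hmain : Filter.Tendsto (fun n : ℕ => ‖φ^[n + 1] x‖) Filter.atTop Filter.atTop := by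
    have heq : ∀ n : ℕ, ‖φ^[n + 1] x‖ = ‖a‖ ^ n * ‖φ x‖ := by
      intro n
      rw [Function.iterate_succ_apply]
      exact iter (φ x) key n
    have hpos : (0:ℝ) < ‖φ x‖ := lt_of_lt_of_le one_pos key
    have : Filter.Tendsto (fun n : ℕ => ‖a‖ ^ n * ‖φ x‖) Filter.atTop Filter.atTop :=
      (tendsto_pow_atTop_atTop_of_one_lt ha).atTop_mul_const hpos
    exact this.congr (fun n => (heq n).symm)
  exact (Filter.tendsto_add_atTop_iff_nat 1).mp hmain
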